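/- Let α ∈ (0,1), let ν and μ be probability measures on a measurable space with ν ≪ μ, and let X be a real-valued measurable function such that ∫ e^{(α−1)X} dν and ∫ e^{αX} dμ are finite and positive. Then (α−1)·D_α(ν‖μ) ≤ α·log ∫ e^{(α−1)X} dν + (1−α)·log ∫ e^{αX} dμ; equivalently, D_α(ν‖μ) ≥ (α/(α−1))·log ∫ e^{(α−1)X} dν − log ∫ e^{αX} dμ. -/

import Mathlib

open MeasureTheory Real
open scoped ENNReal NNReal

/-- Variational lower bound for the Rényi divergence: for `α ∈ (0,1)`,
probability measures `ν ≪ μ` and a measurable function `X` with finite positive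
exponential integrals,
`(α−1)·D_α(ν‖μ) ≤ α·log ∫ e^{(α−1)X} dν + (1−α)·log ∫ e^{αX} dμ`; equivalently,
`D_α(ν‖μ) ≥ (α/(α−1))·log ∫ e^{(α−1)X} dν − log ∫ e^{αX} dμ`, where
`D_α(ν‖μ) = (α−1)⁻¹ log ∫ (dν/dμ)^α dμ`. -/
theorem renyi_variational_lower_bound
    {Ω : Type*} [MeasurableSpace Ω]
    (α : ℝ) (hα : α ∈ Set.Ioo (0 : ℝ) 1)
    (μ ν : Measure Ω) [IsProbabilityMeasure μ] [IsProbabilityMeasure ν]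
    (hac : ν ≪ μ)
    (X : Ω → ℝ) (hX : Measurable X)
    (hIntν : Integrable (fun ω => Real.exp ((α - 1) * X ω)) ν)
    (hIntμ : Integrable (fun ω => Real.exp (α * X ω)) μ)
    (hposν : 0 < ∫ ω, Real.exp ((α - 1) * X ω) ∂ν)
    (hposμ : 0 < ∫ ω, Real.exp (α * X ω) ∂μ) :
    (α - 1) * ((α - 1)⁻¹ * Real.log (∫ ω, (ν.rnDeriv μ ω).toReal ^ α ∂μ)) ≤
      α * Real.log (∫ ω, Real.exp ((α - 1) * X ω) ∂ν) +
        (1 - α) * Real.log (∫ ω, Real.exp (α * X ω) ∂μ) ∧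
    (α / (α - 1)) * Real.log (∫ ω, Real.exp ((α - 1) * X ω) ∂ν) -
        Real.log (∫ ω, Real.exp (α * X ω) ∂μ) ≤
      (α - 1)⁻¹ * Real.log (∫ ω, (ν.rnDeriv μ ω).toReal ^ α ∂μ) := by
  obtain ⟨hα0, hα1⟩ := hα
  have hαne : α ≠ 0 := ne_of_gt hα0
  have h1α : (0:ℝ) < 1 - α := by linarith
  have hne : α - 1 ≠ 0 := by intro h; linarith [h]
  set A := ∫ ω, Real.exp ((α - 1) * X ω) ∂ν with hA
  set B := ∫ ω, Real.exp (α * X ω) ∂μ with hB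
  set f := ν.rnDeriv μ with hfdef
  have hf : Measurable f := Measure.measurable_rnDeriv ν μ
  set e1 : Ω → ℝ≥0∞ := fun ω => ENNReal.ofReal (Real.exp ((α - 1) * X ω)) with he1def
  set e2 : Ω → ℝ≥0∞ := fun ω => ENNReal.ofReal (Real.exp (α * X ω)) with he2def
  have he1 : Measurable e1 := (measurable_const.mul hX).exp.ennreal_ofReal
  have he2 : Measurable e2 := (measurable_const.mul hX).exp.ennreal_ofReal
  -- the two exponential lintegrals
  have hL1 : ∫⁻ ω, e1 ω ∂ν = ENNReal.ofReal A := by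
    rw [hA, MeasureTheory.ofReal_integral_eq_lintegral_ofReal hIntν
      (Filter.Eventually.of_forall fun ω => (Real.exp_pos _).le)]
  have hL2 : ∫⁻ ω, e2 ω ∂μ = ENNReal.ofReal B := by
    rw [hB, MeasureTheory.ofReal_integral_eq_lintegral_ofReal hIntμ
      (Filter.Eventually.of_forall fun ω => (Real.exp_pos _).le)]
  -- Hölder
  have hpq : (1/α).HolderConjugate (1/(1-α)) := by
    rw [Real.holderConjugate_iff]
    constructor
    · rw [lt_div_iff₀ hα0]; linarith
    · field_simp; ring
  have hFmeas : Measurable fun ω => (f ω * e1 ω) ^ α := (hf.mul he1).pow_const α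
  have hGmeas : Measurable fun ω => (e2 ω) ^ (1 - α) := he2.pow_const _
  have key : ∫⁻ ω, f ω ^ α ∂μ ≤ ENNReal.ofReal A ^ α * ENNReal.ofReal B ^ (1 - α) := by
    have holder := ENNReal.lintegral_mul_le_Lp_mul_Lq μ hpq hFmeas.aemeasurable
      hGmeas.aemeasurable
    have hpt : ∀ ω, ((fun ω => (f ω * e1 ω) ^ α) * fun ω => (e2 ω) ^ (1 - α)) ω
        = f ω ^ α := by
      intro ω
      have h12 : e1 ω ^ α * e2 ω ^ (1 - α) = 1 := by
        rw [he1def, he2def]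
        rw [ENNReal.ofReal_rpow_of_pos (Real.exp_pos _),
          ENNReal.ofReal_rpow_of_pos (Real.exp_pos _), ← Real.exp_mul, ← Real.exp_mul,
          ← ENNReal.ofReal_mul (Real.exp_pos _).le, ← Real.exp_add,
          show (α - 1) * X ω * α + α * X ω * (1 - α) = 0 by ring, Real.exp_zero,
          ENNReal.ofReal_one]
      simp only [Pi.mul_apply]
      rw [ENNReal.mul_rpow_of_nonneg _ _ hα0.le, mul_assoc, h12, mul_one]
    rw [lintegral_congr hpt] at holder
    have hexp1 : (1:ℝ) / (1/α) = α := by rw [one_div_one_div]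
    have hexp2 : (1:ℝ) / (1/(1-α)) = 1 - α := by rw [one_div_one_div]
    rw [hexp1, hexp2] at holder
    have hFsimp : ∀ ω, ((f ω * e1 ω) ^ α) ^ (1/α) = f ω * e1 ω := by
      intro ω
      rw [← ENNReal.rpow_mul, mul_one_div_cancel hαne, ENNReal.rpow_one]
    have hGsimp : ∀ ω, ((e2 ω) ^ (1 - α)) ^ (1/(1-α)) = e2 ω := by
      intro ω
      rw [← ENNReal.rpow_mul, mul_one_div_cancel (ne_of_gt h1α), ENNReal.rpow_one]
    rw [lintegral_congr hFsimp, lintegral_congr hGsimp] at holder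
    rwa [MeasureTheory.lintegral_rnDeriv_mul hac he1.aemeasurable, hL1, hL2] at holder
  -- finiteness and positivity of the power lintegral
  have hIlt : ∫⁻ ω, f ω ^ α ∂μ < ⊤ :=
    lt_of_le_of_lt key (ENNReal.mul_lt_top
      (ENNReal.rpow_lt_top_of_nonneg hα0.le ENNReal.ofReal_ne_top)
      (ENNReal.rpow_lt_top_of_nonneg h1α.le ENNReal.ofReal_ne_top))
  have hIne : ∫⁻ ω, f ω ^ α ∂μ ≠ 0 := by
    intro h0
    rw [lintegral_eq_zero_iff (hf.pow_const α)] at h0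
    have hf0 : f =ᵐ[μ] 0 := by
      filter_upwards [h0] with ω hω
      simpa [ENNReal.rpow_eq_zero_iff, hα0, not_lt_of_gt hα0] using hω
    have : ∫⁻ ω, f ω ∂μ = 0 := by
      rw [lintegral_congr_ae hf0]; simp
    rw [Measure.lintegral_rnDeriv hac] at this
    simp at this
  -- relate the real integral with the lintegral
  have hIeq : ∫ ω, (f ω).toReal ^ α ∂μ = (∫⁻ ω, f ω ^ α ∂μ).toReal := by
    rw [← integral_toReal ((hf.pow_const α).aemeasurable)
      ((Measure.rnDeriv_lt_top ν μ).mono fun ω hω =>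
        ENNReal.rpow_lt_top_of_nonneg hα0.le hω.ne)]
    exact integral_congr_ae (Filter.Eventually.of_forall fun ω =>
      (ENNReal.toReal_rpow _ _))
  set I := ∫ ω, (f ω).toReal ^ α ∂μ with hI
  have hIpos : 0 < I := by
    rw [hIeq]
    exact ENNReal.toReal_pos hIne hIlt.ne
  have hIle : I ≤ A ^ α * B ^ (1 - α) := by
    rw [hIeq]
    calc (∫⁻ ω, f ω ^ α ∂μ).toReal
        ≤ (ENNReal.ofReal A ^ α * ENNReal.ofReal B ^ (1 - α)).toReal :=
          ENNReal.toReal_mono (ENNReal.mul_lt_top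
            (ENNReal.rpow_lt_top_of_nonneg hα0.le ENNReal.ofReal_ne_top)
            (ENNReal.rpow_lt_top_of_nonneg h1α.le ENNReal.ofReal_ne_top)).ne key
      _ = A ^ α * B ^ (1 - α) := by
          rw [ENNReal.toReal_mul, ← ENNReal.toReal_rpow, ← ENNReal.toReal_rpow,
            ENNReal.toReal_ofReal hposν.le, ENNReal.toReal_ofReal hposμ.le]
  have hlog : Real.log I ≤ α * Real.log A + (1 - α) * Real.log B := by
    calc Real.log I ≤ Real.log (A ^ α * B ^ (1 - α)) := Real.log_le_log hIpos hIle
      _ = α * Real.log A + (1 - α) * Real.log B := by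
          rw [Real.log_mul (by positivity) (by positivity),
            Real.log_rpow hposν, Real.log_rpow hposμ]
  have hfirst : (α - 1) * ((α - 1)⁻¹ * Real.log I) ≤
      α * Real.log A + (1 - α) * Real.log B := by
    rw [← mul_assoc, mul_inv_cancel₀ hne, one_mul]
    exact hlog
  refine ⟨hfirst, ?_⟩
  have hinv : (α - 1)⁻¹ < 0 := inv_lt_zero.2 (by linarith)
  have h2 := mul_le_mul_of_nonpos_left hlog hinv.le
  have heq : (α - 1)⁻¹ * (α * Real.log A + (1 - α) * Real.log B)
      = α / (α - 1) * Real.log A - Real.log B := by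
    field_simp
    ring
  rw [heq] at h2
  exact h2
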